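/- Complex Frullani integral: for p, q ∈ ℂ with Re p > 0 and Re q > 0, the function t ↦ (exp(−p t) − exp(−q t))/t is integrable on (0, ∞) and ∫_0^∞ (exp(−p t) − exp(−q t))/t dt = Log q − Log p, where Log denotes the principal branch of the complex logarithm. (This identity produces the rational normal-ordering factors between positive- and negative-frequency vertex operators built from the continuum free bosons.) -/

import Mathlib

open MeasureTheory Set Complex

/-- Laplace integral: integrability. -/
lemma frullani_aux_integrable (s : ℂ) (hs : 0 < s.re) :
    IntegrableOn (fun t : ℝ => Complex.exp (-s * t)) (Ioi 0) := by
  have hb : IntegrableOn (fun t : ℝ => Real.exp (-s.re * t)) (Ioi 0) :=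
    exp_neg_integrableOn_Ioi 0 hs
  refine hb.integrable.mono' ?_ ?_
  · exact (Complex.continuous_exp.comp (by fun_prop)).aestronglyMeasurable
  · filter_upwards with t
    rw [Complex.norm_exp]
    simp [Complex.mul_re]

/-- Laplace integral: value. -/
lemma frullani_aux_laplace (s : ℂ) (hs : 0 < s.re) :
    ∫ t : ℝ in Ioi 0, Complex.exp (-s * t) = 1 / s := by
  have hs0 : s ≠ 0 := fun h => by simp [h] at hs
  have key := integral_Ioi_of_hasDerivAt_of_tendsto
    (f := fun t : ℝ => -Complex.exp (-s * t) / s)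
    (f' := fun t : ℝ => Complex.exp (-s * t)) (a := (0:ℝ)) (m := 0)
    ?_ ?_ (frullani_aux_integrable s hs) ?_
  · rw [key]; simp [neg_div]
  · exact (Continuous.continuousWithinAt (by fun_prop))
  · intro t _
    have h1 : HasDerivAt (fun t : ℝ => -s * t) (-s) t := by
      simpa using ((hasDerivAt_id t).ofReal_comp (z := t)).const_mul (-s)
    have := ((h1.cexp).neg.div_const s)
    refine this.congr_deriv ?_
    field_simp
  · have h1 : Filter.Tendsto (fun t : ℝ => s.re * t) Filter.atTop Filter.atTop :=
      Filter.Tendsto.const_mul_atTop hs Filter.tendsto_id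
    have h2 : Filter.Tendsto (fun t : ℝ => -(s.re * t)) Filter.atTop Filter.atBot :=
      Filter.tendsto_neg_atBot_iff.mpr h1
    have h3 : Filter.Tendsto (fun t : ℝ => Real.exp (-(s.re * t))) Filter.atTop (nhds 0) :=
      Real.tendsto_exp_atBot.comp h2
    have hb : Filter.Tendsto (fun t : ℝ => Real.exp (-s.re * t) / ‖s‖)
        Filter.atTop (nhds 0) := by
      simpa [neg_mul] using h3.div_const ‖s‖
    refine squeeze_zero_norm (fun t => ?_) hb
    rw [norm_div, norm_neg, Complex.norm_exp]
    simp [Complex.mul_re]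

/-- Complex Frullani integral: for `p, q ∈ ℂ` with positive real parts, the function
`t ↦ (exp(-p t) - exp(-q t))/t` is integrable on `(0, ∞)` and its integral equals
`Log q - Log p`, with `Log` the principal complex logarithm. -/
theorem frullani_exp_integral (p q : ℂ) (hp : 0 < p.re) (hq : 0 < q.re) :
    MeasureTheory.IntegrableOn
      (fun t : ℝ => (Complex.exp (-p * t) - Complex.exp (-q * t)) / t) (Set.Ioi 0) ∧
    ∫ t : ℝ in Set.Ioi 0, (Complex.exp (-p * t) - Complex.exp (-q * t)) / t
      = Complex.log q - Complex.log p := by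
  set m : ℝ := min p.re q.re with hm_def
  have hm : 0 < m := lt_min hp hq
  set s : ℝ → ℂ := fun u => p + u * (q - p) with hs_def
  have hsre : ∀ u : ℝ, u ∈ Icc (0:ℝ) 1 → m ≤ (s u).re := by
    intro u hu
    have h1 : (s u).re = p.re + u * (q.re - p.re) := by simp [hs_def, Complex.add_re,
      Complex.mul_re, Complex.sub_re, Complex.ofReal_re, Complex.ofReal_im]
    have hm1 : m ≤ p.re := min_le_left _ _
    have hm2 : m ≤ q.re := min_le_right _ _
    nlinarith [hu.1, hu.2]
  have hspos : ∀ u : ℝ, u ∈ Icc (0:ℝ) 1 → 0 < (s u).re := fun u hu => lt_of_lt_of_le hm (hsre u hu)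
  set F : ℝ → ℝ → ℂ := fun t u => (q - p) * Complex.exp (-(s u) * t) with hF_def
  set μ : Measure ℝ := volume.restrict (Ioi 0) with hμ_def
  set ν : Measure ℝ := volume.restrict (Ioc 0 1) with hν_def
  -- integrability on the product
  have hFmeas : Continuous (fun z : ℝ × ℝ => F z.1 z.2) := by
    apply Continuous.mul continuous_const
    exact Complex.continuous_exp.comp (by fun_prop)
  have hg1 : Integrable (fun t : ℝ => ‖q - p‖ * Real.exp (-m * t)) μ :=
    ((exp_neg_integrableOn_Ioi 0 hm).integrable.const_mul _)
  have hg2 : Integrable (fun _ : ℝ => (1:ℝ)) ν := by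
    refine (integrableOn_const_iff (C := (1:ℝ))).2 (Or.inr ?_)
    simp [Real.volume_Ioc]
  have hg0 := Integrable.mul_prod (μ := μ) (ν := ν)
    (f := fun t : ℝ => ‖q - p‖ * Real.exp (-m * t)) (g := fun _ : ℝ => (1:ℝ)) hg1 hg2
  have hg : Integrable (fun z : ℝ × ℝ => ‖q - p‖ * Real.exp (-m * z.1)) (μ.prod ν) := by
    simpa using hg0
  have hFint : Integrable (fun z : ℝ × ℝ => F z.1 z.2) (μ.prod ν) := by
    refine (hg.mono' hFmeas.aestronglyMeasurable ?_)
    rw [hμ_def, hν_def, Measure.prod_restrict]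
    rw [ae_restrict_iff' (measurableSet_Ioi.prod measurableSet_Ioc)]
    filter_upwards with z hz
    obtain ⟨hz1, hz2⟩ := hz
    have ht : (0:ℝ) < z.1 := hz1
    have hu : z.2 ∈ Icc (0:ℝ) 1 := ⟨le_of_lt hz2.1, hz2.2⟩
    rw [hF_def]
    simp only [norm_mul, Complex.norm_exp]
    have hre : (-(s z.2) * (z.1:ℂ)).re = -(s z.2).re * z.1 := by
      simp [Complex.mul_re]
    rw [hre]
    have hle : Real.exp (-(s z.2).re * z.1) ≤ Real.exp (-m * z.1) := by
      apply Real.exp_le_exp.2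
      have := hsre z.2 hu
      nlinarith
    exact mul_le_mul_of_nonneg_left hle (norm_nonneg _)
  -- inner integral over u for fixed t > 0
  have hinner : ∀ t : ℝ, t ∈ Ioi (0:ℝ) →
      (∫ u, F t u ∂ν) = (Complex.exp (-p * t) - Complex.exp (-q * t)) / t := by
    intro t ht
    have ht0 : (t:ℂ) ≠ 0 := by exact_mod_cast ne_of_gt (mem_Ioi.mp ht)
    rw [hν_def, ← intervalIntegral.integral_of_le (zero_le_one)]
    have hderiv : ∀ u ∈ uIcc (0:ℝ) 1,
        HasDerivAt (fun u : ℝ => -Complex.exp (-(s u) * t) / t) (F t u) u := by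
      intro u _
      have h1 : HasDerivAt (fun u : ℝ => (u:ℂ)) 1 u := (hasDerivAt_id u).ofReal_comp
      have h2 : HasDerivAt (fun u : ℝ => -(s u) * (t:ℂ))
          (-(1 * (q - p)) * t) u := by
        exact (((h1.mul_const (q - p)).const_add p).neg.mul_const (t:ℂ))
      have h3 := ((h2.cexp).neg.div_const (t:ℂ))
      refine h3.congr_deriv ?_
      rw [hF_def]
      field_simp
    have hint : IntervalIntegrable (fun u => F t u) volume 0 1 := by
      apply Continuous.intervalIntegrable
      apply Continuous.mul continuous_const
      exact Complex.continuous_exp.comp (by fun_prop)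
    rw [intervalIntegral.integral_eq_sub_of_hasDerivAt hderiv hint]
    have e1 : s 1 = q := by rw [hs_def]; push_cast; ring
    have e0 : s 0 = p := by rw [hs_def]; push_cast; ring
    rw [e1, e0]
    field_simp
    ring
  -- integrability of the target
  have htarget : IntegrableOn
      (fun t : ℝ => (Complex.exp (-p * t) - Complex.exp (-q * t)) / t) (Ioi 0) := by
    have := hFint.integral_prod_left
    exact this.congr ((ae_restrict_iff' measurableSet_Ioi).mpr
      (Filter.Eventually.of_forall hinner))
  refine ⟨htarget, ?_⟩
  -- compute the integral
  have swap := integral_integral_swap (f := F) hFint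
  have lhs_eq : ∫ t : ℝ in Set.Ioi 0, (Complex.exp (-p * t) - Complex.exp (-q * t)) / t
      = ∫ t, (∫ u, F t u ∂ν) ∂μ := by
    rw [hμ_def]
    exact (setIntegral_congr_fun measurableSet_Ioi hinner).symm
  rw [lhs_eq, swap]
  -- outer integral over u
  have houter : ∀ u : ℝ, u ∈ Icc (0:ℝ) 1 →
      (∫ t, F t u ∂μ) = (q - p) * (s u)⁻¹ := by
    intro u hu
    rw [hμ_def, hF_def]
    simp only
    rw [MeasureTheory.integral_const_mul, frullani_aux_laplace (s u) (hspos u hu), one_div]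
  have hν_eq : ∫ u, (∫ t, F t u ∂μ) ∂ν = ∫ u in (0:ℝ)..1, (q - p) * (s u)⁻¹ := by
    rw [intervalIntegral.integral_of_le zero_le_one, hν_def]
    refine setIntegral_congr_fun measurableSet_Ioc (fun u hu => ?_)
    exact houter u ⟨le_of_lt hu.1, hu.2⟩
  rw [hν_eq]
  -- FTC for log along the segment
  have hlogderiv : ∀ u ∈ uIcc (0:ℝ) 1,
      HasDerivAt (fun u : ℝ => Complex.log (s u)) ((q - p) * (s u)⁻¹) u := by
    intro u hu
    rw [uIcc_of_le zero_le_one] at hu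
    have hz : s u ∈ Complex.slitPlane := Or.inl (hspos u hu)
    have hS : HasDerivAt (fun z : ℂ => p + z * (q - p)) (q - p) (u : ℂ) := by
      simpa using (((hasDerivAt_id (u:ℂ)).mul_const (q - p)).const_add p)
    have hlog : HasDerivAt (fun z : ℂ => Complex.log (p + z * (q - p)))
        ((s u)⁻¹ * (q - p)) (u : ℂ) := by
      have := (Complex.hasDerivAt_log hz).comp (u : ℂ) hS
      exact this
    have := hlog.comp_ofReal
    simpa [hs_def, mul_comm] using this
  have hcont_int : IntervalIntegrable (fun u : ℝ => (q - p) * (s u)⁻¹) volume 0 1 := by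
    apply ContinuousOn.intervalIntegrable
    apply ContinuousOn.mul continuousOn_const
    apply ContinuousOn.inv₀
    · exact (Continuous.continuousOn (by fun_prop))
    · intro u hu
      rw [uIcc_of_le zero_le_one] at hu
      exact fun h => by simpa [h] using hspos u hu
  rw [intervalIntegral.integral_eq_sub_of_hasDerivAt hlogderiv hcont_int]
  have e1 : s 1 = q := by rw [hs_def]; push_cast; ring
  have e0 : s 0 = p := by rw [hs_def]; push_cast; ring
  rw [e1, e0]
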